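/- Let γ1, γ2, γ3 ∈ S² with γ1, γ2 linearly independent, set x = ⟨γ1,γ3⟩, y = ⟨γ2,γ3⟩, z = ⟨γ1,γ2⟩, and let γp be the orthogonal projection of γ3 onto span{γ1,γ2}. If γp ≠ 0, then γp/‖γp‖ belongs to Ω(γ1,γ2) if and only if x < yz and y < xz. -/

import Mathlib

noncomputable section

open scoped RealInnerProductSpace

/-- ℝ³ as a Euclidean space. -/
abbrev V3 : Type := EuclideanSpace ℝ (Fin 3)

/-- The unit sphere S² in ℝ³. -/
def unitSphere : Set V3 := {v : V3 | ‖v‖ = 1}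

/-- γ₁, γ₂, γ₃ are cycle-consistent if λ₁γ₁ + λ₂γ₂ + λ₃γ₃ = 0 for some λ₁, λ₂, λ₃ > 0. -/
def CycleConsistent (γ₁ γ₂ γ₃ : V3) : Prop :=
  ∃ l₁ l₂ l₃ : ℝ, 0 < l₁ ∧ 0 < l₂ ∧ 0 < l₃ ∧ l₁ • γ₁ + l₂ • γ₂ + l₃ • γ₃ = 0

/-- The cycle-consistency region Ω(γ₁,γ₂) = {γ ∈ S² : γ₁, γ₂, γ are cycle-consistent}. -/
def consistencyRegion (γ₁ γ₂ : V3) : Set V3 :=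
  {γ ∈ unitSphere | CycleConsistent γ₁ γ₂ γ}

/-- Great-circle distance d_g(u,v) = arccos⟨u,v⟩ for unit vectors. -/
def dg (u v : V3) : ℝ := Real.arccos ⟪u, v⟫

/-- The AAB inconsistency I_AAB(γ₃; γ₁, γ₂) = inf_{γ ∈ Ω(γ₁,γ₂)} d_g(γ₃, γ). -/
def IAAB (γ₃ γ₁ γ₂ : V3) : ℝ := sInf ((dg γ₃) '' consistencyRegion γ₁ γ₂)

/-- For γ₁, γ₂, γ₃ ∈ S² with γ₁, γ₂ linearly independent, with
x = ⟨γ₁,γ₃⟩, y = ⟨γ₂,γ₃⟩, z = ⟨γ₁,γ₂⟩ and γp the orthogonal projection of γ₃ onto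
span{γ₁,γ₂}: if γp ≠ 0 then γp/‖γp‖ ∈ Ω(γ₁,γ₂) ↔ (x < yz ∧ y < xz). -/
theorem stmt_3 (γ₁ γ₂ γ₃ : V3) (h₁ : γ₁ ∈ unitSphere) (h₂ : γ₂ ∈ unitSphere)
    (h₃ : γ₃ ∈ unitSphere) (hli : LinearIndependent ℝ ![γ₁, γ₂])
    (x y z : ℝ) (hx : x = ⟪γ₁, γ₃⟫) (hy : y = ⟪γ₂, γ₃⟫) (hz : z = ⟪γ₁, γ₂⟫)
    (γp : V3) (hγp : γp = (Submodule.orthogonalProjection (Submodule.span ℝ {γ₁, γ₂}) γ₃ : V3))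
    (hne : γp ≠ 0) :
    ‖γp‖⁻¹ • γp ∈ consistencyRegion γ₁ γ₂ ↔ x < y * z ∧ y < x * z := by

  have hn1 : ‖γ₁‖ = 1 := h₁
  have hn2 : ‖γ₂‖ = 1 := h₂
  have hi11 : ⟪γ₁, γ₁⟫ = 1 := by
    rw [real_inner_self_eq_norm_sq, hn1]; norm_num
  have hi22 : ⟪γ₂, γ₂⟫ = 1 := by
    rw [real_inner_self_eq_norm_sq, hn2]; norm_num
  have hz12 : ⟪γ₁, γ₂⟫ = z := hz.symm
  have hz21 : ⟪γ₂, γ₁⟫ = z := by rw [real_inner_comm]; exact hz.symm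
  have hpair := LinearIndependent.pair_iff.mp hli
  have hnp : 0 < ‖γp‖ := norm_pos_iff.mpr hne
  -- z² < 1
  have hz1 : z ^ 2 < 1 := by
    have hv : γ₂ - z • γ₁ ≠ 0 := by
      intro h
      have h' : (-z) • γ₁ + (1 : ℝ) • γ₂ = 0 := by
        rw [neg_smul, one_smul]
        rw [sub_eq_zero] at h
        rw [h]; abel
      exact one_ne_zero (hpair (-z) 1 h').2
    have hpos : 0 < ⟪γ₂ - z • γ₁, γ₂ - z • γ₁⟫ := by
      rw [real_inner_self_eq_norm_sq]
      exact pow_pos (norm_pos_iff.mpr hv) 2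
    have hexp : ⟪γ₂ - z • γ₁, γ₂ - z • γ₁⟫ = 1 - z ^ 2 := by
      simp only [inner_sub_left, inner_sub_right, real_inner_smul_left,
        real_inner_smul_right, hi11, hi22, hz12, hz21]
      ring
    linarith [hexp ▸ hpos]
  -- write γp = a • γ₁ + b • γ₂
  have hmem : γp ∈ Submodule.span ℝ ({γ₁, γ₂} : Set V3) := hγp ▸ SetLike.coe_mem _
  obtain ⟨a, b, hab⟩ := Submodule.mem_span_pair.mp hmem
  have hperp1 : ⟪γ₃ - γp, γ₁⟫ = 0 := by
    rw [hγp]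
    exact Submodule.starProjection_inner_eq_zero γ₃ γ₁
      (Submodule.subset_span (by simp))
  have hperp2 : ⟪γ₃ - γp, γ₂⟫ = 0 := by
    rw [hγp]
    exact Submodule.starProjection_inner_eq_zero γ₃ γ₂
      (Submodule.subset_span (by simp))
  rw [inner_sub_left] at hperp1 hperp2
  have hx' : ⟪γp, γ₁⟫ = x := by
    rw [hx]; linarith [real_inner_comm γ₃ γ₁, hperp1]
  have hy' : ⟪γp, γ₂⟫ = y := by
    rw [hy]; linarith [real_inner_comm γ₃ γ₂, hperp2]
  have e1 : a + b * z = x := by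
    rw [← hx', ← hab]
    simp only [inner_add_left, real_inner_smul_left, hi11, hz21]
    ring
  have e2 : a * z + b = y := by
    rw [← hy', ← hab]
    simp only [inner_add_left, real_inner_smul_left, hi22, hz12]
    ring
  have keyx : x - y * z = a * (1 - z ^ 2) := by
    rw [← e1, ← e2]; ring
  have keyy : y - x * z = b * (1 - z ^ 2) := by
    rw [← e1, ← e2]; ring
  have hz1' : 0 < 1 - z ^ 2 := by linarith
  constructor
  · rintro ⟨-, l1, l2, l3, hl1, hl2, hl3, heq⟩
    have hcomb : (l1 + l3 * ‖γp‖⁻¹ * a) • γ₁ + (l2 + l3 * ‖γp‖⁻¹ * b) • γ₂ = 0 := by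
      rw [← heq, ← hab]; module
    obtain ⟨c1, c2⟩ := hpair _ _ hcomb
    have hinv : 0 < ‖γp‖⁻¹ := by positivity
    have ha : a < 0 := by
      by_contra h
      push_neg at h
      nlinarith [mul_nonneg (mul_nonneg hl3.le hinv.le) h]
    have hb : b < 0 := by
      by_contra h
      push_neg at h
      nlinarith [mul_nonneg (mul_nonneg hl3.le hinv.le) h]
    constructor
    · linarith [mul_neg_of_neg_of_pos ha hz1']
    · linarith [mul_neg_of_neg_of_pos hb hz1']
  · rintro ⟨hxy, hyx⟩
    have ha : a < 0 := by
      by_contra h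
      push_neg at h
      linarith [mul_nonneg h hz1'.le]
    have hb : b < 0 := by
      by_contra h
      push_neg at h
      linarith [mul_nonneg h hz1'.le]
    refine ⟨?_, -a, -b, ‖γp‖, by linarith, by linarith, hnp, ?_⟩
    · show ‖‖γp‖⁻¹ • γp‖ = 1
      rw [norm_smul, norm_inv, norm_norm, inv_mul_cancel₀ (ne_of_gt hnp)]
    · have hs : ‖γp‖ • (‖γp‖⁻¹ • γp) = γp := by
        rw [smul_smul, mul_inv_cancel₀ (ne_of_gt hnp), one_smul]
      rw [hs, ← hab]; module
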